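/- arXiv:2110.00665 — 2 statements merged into one kernel-verified Lean document; each statement's English description precedes it below -/
import Mathlib

section
/- Let (Ω, ℱ, μ) be a probability space, 𝒢 ⊆ ℱ a sub-σ-algebra, and Z, g : Ω → ℝ^n with Z strongly 𝒢-measurable, Z ∈ L²(μ), g ∈ L²(μ). Let G be a real symmetric n×n matrix, τ ∈ ℝ with x · (G x) ≥ τ ‖x‖² for all x ∈ ℝ^n, b ∈ ℝ^n, and z⋆ ∈ ℝ^n with G z⋆ = b. Suppose E[g | 𝒢](ω) = G Z(ω) − b for μ-almost every ω (conditional unbiasedness), and let η ≥ 0. Then ∫ ‖Z(ω) − η g(ω) − z⋆‖² dμ(ω) ≤ (1 − 2ητ) ∫ ‖Z(ω) − z⋆‖² dμ(ω) + η² ∫ ‖g(ω)‖² dμ(ω). -/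
set_option maxHeartbeats 1000000

open Matrix MeasureTheory
open scoped RealInnerProductSpace

/-- Conditional expectation commutes with continuous linear maps. -/
lemma condExp_clm_comm {α E F : Type*} [NormedAddCommGroup E] [NormedSpace ℝ E] [CompleteSpace E]
    [NormedAddCommGroup F] [NormedSpace ℝ F] [CompleteSpace F]
    {m m0 : MeasurableSpace α} {μ : Measure α} (hm : m ≤ m0) [SigmaFinite (μ.trim hm)]
    (T : E →L[ℝ] F) {f : α → E} (hf : Integrable f μ) :
    MeasureTheory.condExp m μ (fun ω => T (f ω)) =ᵐ[μ] fun ω => T ((μ[f|m]) ω) := by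
  refine (ae_eq_condExp_of_forall_setIntegral_eq hm (T.integrable_comp hf)
    (fun s _ _ => (T.integrable_comp integrable_condExp).integrableOn)
    (fun s hs hμs => ?_)
    ((T.continuous.comp_stronglyMeasurable stronglyMeasurable_condExp).aestronglyMeasurable)).symm
  rw [T.integral_comp_comm integrable_condExp.integrableOn,
    setIntegral_condExp hm hf hs, ← T.integral_comp_comm hf.integrableOn]

/-- The product of two `L²` real functions is integrable. -/
lemma mul_int' {α : Type*} {m0 : MeasurableSpace α} {μ : Measure α} {f h : α → ℝ}
    (hf : MemLp f 2 μ) (hh : MemLp h 2 μ) : Integrable (fun ω => f ω * h ω) μ := by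
  have := L2.integrable_inner (𝕜 := ℝ) (hf.toLp f) (hh.toLp h)
  refine this.congr ?_
  filter_upwards [hf.coeFn_toLp, hh.coeFn_toLp] with ω h1 h2
  simp [h1, h2, RCLike.inner_apply, conj_trivial, mul_comm]

/-- The pointwise inner product of two `L²` functions is integrable. -/
lemma inner_int' {α E : Type*} [NormedAddCommGroup E] [InnerProductSpace ℝ E]
    {m0 : MeasurableSpace α} {μ : Measure α} {f h : α → E}
    (hf : MemLp f 2 μ) (hh : MemLp h 2 μ) : Integrable (fun ω => ⟪f ω, h ω⟫) μ := by
  have := L2.integrable_inner (𝕜 := ℝ) (hf.toLp f) (hh.toLp h)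
  refine this.congr ?_
  filter_upwards [hf.coeFn_toLp, hh.coeFn_toLp] with ω h1 h2
  simp [h1, h2]

/-- Expected one-step descent with a conditionally unbiased stochastic gradient:
if `Z` is strongly `𝒢`-measurable, `Z, g ∈ L²(μ)`, `G` is a real symmetric matrix
with `x ⬝ (G x) ≥ τ ‖x‖²` for all `x`, `G z⋆ = b`, `E[g | 𝒢] = G Z − b` a.e., and
`η ≥ 0`, then
`∫ ‖Z − η g − z⋆‖² dμ ≤ (1 − 2ητ) ∫ ‖Z − z⋆‖² dμ + η² ∫ ‖g‖² dμ`. -/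
theorem expected_one_step_descent {Ω : Type*} {mΩ : MeasurableSpace Ω}
    (μ : Measure Ω) [IsProbabilityMeasure μ]
    {𝒢 : MeasurableSpace Ω} (h𝒢 : 𝒢 ≤ mΩ) {n : ℕ}
    (Z g : Ω → EuclideanSpace ℝ (Fin n))
    (hZmeas : StronglyMeasurable[𝒢] Z)
    (hZ : MemLp Z 2 μ) (hg : MemLp g 2 μ)
    (G : Matrix (Fin n) (Fin n) ℝ) (hGsymm : G.IsSymm) (τ : ℝ)
    (hlb : ∀ x : EuclideanSpace ℝ (Fin n),
      τ * ‖x‖ ^ 2 ≤ ⟪x, Matrix.toEuclideanLin G x⟫)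
    (b zstar : EuclideanSpace ℝ (Fin n))
    (hzstar : Matrix.toEuclideanLin G zstar = b)
    (hunbiased : μ[g|𝒢] =ᵐ[μ] fun ω => Matrix.toEuclideanLin G (Z ω) - b)
    (η : ℝ) (hη : 0 ≤ η) :
    ∫ ω, ‖Z ω - η • g ω - zstar‖ ^ 2 ∂μ ≤
      (1 - 2 * η * τ) * ∫ ω, ‖Z ω - zstar‖ ^ 2 ∂μ + η ^ 2 * ∫ ω, ‖g ω‖ ^ 2 ∂μ := by
  haveI : SigmaFinite (μ.trim h𝒢) := inferInstance
  set F : Ω → EuclideanSpace ℝ (Fin n) := fun ω => Z ω - zstar with hFdef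
  have hF : MemLp F 2 μ := hZ.sub (memLp_const zstar)
  have hFmeas : StronglyMeasurable[𝒢] F := hZmeas.sub stronglyMeasurable_const
  have hgint : Integrable g μ := hg.integrable one_le_two
  set T : EuclideanSpace ℝ (Fin n) →L[ℝ] EuclideanSpace ℝ (Fin n) :=
    LinearMap.toContinuousLinearMap (Matrix.toEuclideanLin G) with hTdef
  set GF : Ω → EuclideanSpace ℝ (Fin n) := fun ω => T (F ω) with hGFdef
  have hGF : MemLp GF 2 μ := T.comp_memLp' hF
  -- componentwise conditional expectation computation
  have hcomp : ∀ i : Fin n, ∫ ω, F ω i * g ω i ∂μ = ∫ ω, F ω i * GF ω i ∂μ := by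
    intro i
    have hgi : MemLp (fun ω => g ω i) 2 μ := (EuclideanSpace.proj (𝕜 := ℝ) i).comp_memLp' hg
    have hFi : MemLp (fun ω => F ω i) 2 μ := (EuclideanSpace.proj (𝕜 := ℝ) i).comp_memLp' hF
    have hFimeas : StronglyMeasurable[𝒢] (fun ω => F ω i) :=
      (EuclideanSpace.proj (𝕜 := ℝ) i).continuous.comp_stronglyMeasurable hFmeas
    have hmulint : Integrable (fun ω => F ω i * g ω i) μ := mul_int' hFi hgi
    have hpull : μ[(fun ω => F ω i) * (fun ω => g ω i)|𝒢]
        =ᵐ[μ] (fun ω => F ω i) * μ[(fun ω => g ω i)|𝒢] :=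
      condExp_mul_of_stronglyMeasurable_left hFimeas hmulint (hgi.integrable one_le_two)
    have hgi_cond : μ[(fun ω => g ω i)|𝒢] =ᵐ[μ] fun ω => GF ω i := by
      refine (condExp_clm_comm h𝒢 (EuclideanSpace.proj (𝕜 := ℝ) i) hgint).trans ?_
      filter_upwards [hunbiased] with ω hω
      show ((μ[g|𝒢]) ω) i = GF ω i
      rw [hω]
      show (Matrix.toEuclideanLin G (Z ω) - b) i = (Matrix.toEuclideanLin G (F ω)) i
      rw [← hzstar, ← map_sub]
    calc ∫ ω, F ω i * g ω i ∂μ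
        = ∫ ω, (μ[(fun ω => F ω i) * (fun ω => g ω i)|𝒢]) ω ∂μ := (integral_condExp h𝒢).symm
      _ = ∫ ω, F ω i * (μ[(fun ω => g ω i)|𝒢]) ω ∂μ := integral_congr_ae hpull
      _ = ∫ ω, F ω i * GF ω i ∂μ := by
          refine integral_congr_ae ?_
          filter_upwards [hgi_cond] with ω hω
          rw [hω]
  have hkey : ∫ ω, ⟪F ω, g ω⟫ ∂μ = ∫ ω, ⟪F ω, GF ω⟫ ∂μ := by
    have h1 : ∫ ω, ⟪F ω, g ω⟫ ∂μ = ∑ i, ∫ ω, F ω i * g ω i ∂μ := by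
      rw [← integral_finset_sum (f := fun i ω => F ω i * g ω i) Finset.univ (fun i _ =>
        mul_int' ((EuclideanSpace.proj (𝕜 := ℝ) i).comp_memLp' hF)
          ((EuclideanSpace.proj (𝕜 := ℝ) i).comp_memLp' hg))]
      refine integral_congr_ae (Filter.Eventually.of_forall fun ω => ?_)
      simp [PiLp.inner_apply, RCLike.inner_apply, conj_trivial, mul_comm]
    have h2 : ∫ ω, ⟪F ω, GF ω⟫ ∂μ = ∑ i, ∫ ω, F ω i * GF ω i ∂μ := by
      rw [← integral_finset_sum (f := fun i ω => F ω i * GF ω i) Finset.univ (fun i _ =>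
        mul_int' ((EuclideanSpace.proj (𝕜 := ℝ) i).comp_memLp' hF)
          ((EuclideanSpace.proj (𝕜 := ℝ) i).comp_memLp' hGF))]
      refine integral_congr_ae (Filter.Eventually.of_forall fun ω => ?_)
      simp [PiLp.inner_apply, RCLike.inner_apply, conj_trivial, mul_comm]
    rw [h1, h2]
    exact Finset.sum_congr rfl fun i _ => hcomp i
  have hI1 : Integrable (fun ω => ‖F ω‖ ^ 2) μ := hF.norm.integrable_sq
  have hI2 : Integrable (fun ω => ⟪F ω, g ω⟫) μ := inner_int' hF hg
  have hI3 : Integrable (fun ω => ‖g ω‖ ^ 2) μ := hg.norm.integrable_sq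
  have hτint : τ * ∫ ω, ‖F ω‖ ^ 2 ∂μ ≤ ∫ ω, ⟪F ω, g ω⟫ ∂μ := by
    rw [hkey, ← integral_const_mul]
    exact integral_mono (hI1.const_mul τ) (inner_int' hF hGF) fun ω => hlb (F ω)
  have hexp : ∀ ω, ‖Z ω - η • g ω - zstar‖ ^ 2
      = ‖F ω‖ ^ 2 - 2 * η * ⟪F ω, g ω⟫ + η ^ 2 * ‖g ω‖ ^ 2 := by
    intro ω
    have h' : Z ω - η • g ω - zstar = F ω - η • g ω := by
      simp only [hFdef]; abel
    rw [h', norm_sub_sq_real, real_inner_smul_right, norm_smul]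
    simp [Real.norm_eq_abs, mul_pow, sq_abs]
    ring
  have hsplit : ∫ ω, ‖Z ω - η • g ω - zstar‖ ^ 2 ∂μ
      = ∫ ω, ‖F ω‖ ^ 2 ∂μ - 2 * η * ∫ ω, ⟪F ω, g ω⟫ ∂μ + η ^ 2 * ∫ ω, ‖g ω‖ ^ 2 ∂μ := by
    rw [integral_congr_ae (Filter.Eventually.of_forall hexp),
      integral_add (show Integrable (fun ω => ‖F ω‖ ^ 2 - 2 * η * ⟪F ω, g ω⟫) μ from
        hI1.sub (hI2.const_mul _)) (hI3.const_mul _),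
      integral_sub hI1 (hI2.const_mul _), integral_const_mul, integral_const_mul]
  have hAeq : ∫ ω, ‖Z ω - zstar‖ ^ 2 ∂μ = ∫ ω, ‖F ω‖ ^ 2 ∂μ := rfl
  rw [hsplit, hAeq]
  have := mul_le_mul_of_nonneg_left hτint hη
  nlinarith [this]
end

section
/- Let (Ω, ℱ, μ) be a probability space and (𝒢_t)_{t∈ℕ} a filtration with 𝒢_t ⊆ ℱ. Let G be a real symmetric n×n matrix and τ > 0 with x · (G x) ≥ τ ‖x‖² for all x ∈ ℝ^n; let b ∈ ℝ^n and z⋆ ∈ ℝ^n with G z⋆ = b; let σ ≥ 0 and 0 < η ≤ 1/(2τ). Let Z_t, g_t : Ω → ℝ^n for t ∈ ℕ satisfy: Z_t is strongly 𝒢_t-measurable and Z_t ∈ L²(μ); g_t ∈ L²(μ) with ∫ ‖g_t‖² dμ ≤ σ²; E[g_t | 𝒢_t](ω) = G Z_t(ω) − b for μ-a.e. ω; and Z_{t+1}(ω) = Z_t(ω) − η g_t(ω) for all ω. Then for every t ∈ ℕ, ∫ ‖Z_t − z⋆‖² dμ ≤ (1 − 2ητ)^t ∫ ‖Z_0 −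 z⋆‖² dμ + (1 − (1 − 2ητ)^t) · (η σ²)/(2τ). -/
open Matrix MeasureTheory
open scoped RealInnerProductSpace


section Aux

variable {Ω : Type*} {m mΩ : MeasurableSpace Ω} {μ : Measure Ω}

lemma my_integrable_inner {E : Type*} [NormedAddCommGroup E] [InnerProductSpace ℝ E]
    {f g : Ω → E} (hf : MemLp f 2 μ) (hg : MemLp g 2 μ) :
    Integrable (fun ω => ⟪f ω, g ω⟫) μ := by
  have h := L2.integrable_inner (𝕜 := ℝ) (hf.toLp f) (hg.toLp g)
  refine h.congr ?_
  filter_upwards [hf.coeFn_toLp, hg.coeFn_toLp] with ω h1 h2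
  rw [h1, h2]

lemma my_condexp_clm {E F : Type*} [NormedAddCommGroup E] [NormedSpace ℝ E] [CompleteSpace E]
    [NormedAddCommGroup F] [NormedSpace ℝ F] [CompleteSpace F]
    (hm : m ≤ mΩ) {μ : Measure Ω} [SigmaFinite (μ.trim hm)]
    (T : E →L[ℝ] F) {f : Ω → E} (hf : Integrable f μ) :
    (fun ω => T ((μ[f|m]) ω)) =ᵐ[μ] μ[fun ω => T (f ω)|m] := by
  refine ae_eq_condExp_of_forall_setIntegral_eq hm (T.integrable_comp hf)
    (fun s _ _ => (T.integrable_comp integrable_condExp).integrableOn)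
    (fun s hs _ => ?_) ?_
  · calc ∫ x in s, T ((μ[f|m]) x) ∂μ = T (∫ x in s, (μ[f|m]) x ∂μ) :=
          T.integral_comp_comm integrable_condExp.integrableOn
      _ = T (∫ x in s, f x ∂μ) := by rw [setIntegral_condExp hm hf hs]
      _ = ∫ x in s, T (f x) ∂μ := (T.integral_comp_comm hf.integrableOn).symm
  · exact StronglyMeasurable.aestronglyMeasurable
      (T.continuous.comp_stronglyMeasurable stronglyMeasurable_condExp)

end Aux

section Aux2
variable {Ω : Type*} {m mΩ : MeasurableSpace Ω}

lemma my_integral_inner_condexp {n : ℕ} (hm : m ≤ mΩ) {μ : Measure Ω}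
    [IsFiniteMeasure μ] [SigmaFinite (μ.trim hm)]
    {f g h : Ω → EuclideanSpace ℝ (Fin n)}
    (hfm : StronglyMeasurable[m] f) (hf : MemLp f 2 μ) (hg : MemLp g 2 μ)
    (hh : MemLp h 2 μ) (hgh : μ[g|m] =ᵐ[μ] h) :
    ∫ ω, ⟪f ω, g ω⟫ ∂μ = ∫ ω, ⟪f ω, h ω⟫ ∂μ := by
  have hgi : Integrable g μ := hg.integrable one_le_two
  -- coordinates
  have hfi2 : ∀ i, MemLp (fun ω => f ω i) 2 μ := fun i => by
    simpa [Function.comp_def] using (EuclideanSpace.proj (𝕜 := ℝ) i).comp_memLp' hf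
  have hgi2 : ∀ i, MemLp (fun ω => g ω i) 2 μ := fun i => by
    simpa [Function.comp_def] using (EuclideanSpace.proj (𝕜 := ℝ) i).comp_memLp' hg
  have hhi2 : ∀ i, MemLp (fun ω => h ω i) 2 μ := fun i => by
    simpa [Function.comp_def] using (EuclideanSpace.proj (𝕜 := ℝ) i).comp_memLp' hh
  have hfim : ∀ i, StronglyMeasurable[m] (fun ω => f ω i) := fun i =>
    (EuclideanSpace.proj (𝕜 := ℝ) i).continuous.comp_stronglyMeasurable hfm
  have hmul : ∀ (u v : Ω → EuclideanSpace ℝ (Fin n)), MemLp u 2 μ → MemLp v 2 μ → ∀ i,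
      Integrable (fun ω => u ω i * v ω i) μ := fun u v hu hv i => by
    have := my_integrable_inner (E := ℝ)
      (by simpa [Function.comp_def] using (EuclideanSpace.proj (𝕜 := ℝ) i).comp_memLp' hu)
      (by simpa [Function.comp_def] using (EuclideanSpace.proj (𝕜 := ℝ) i).comp_memLp' hv)
    simpa [RCLike.inner_apply, mul_comm] using this
  -- condexp of coordinates
  have hcoord : ∀ i, μ[(fun ω => g ω i)|m] =ᵐ[μ] fun ω => h ω i := by
    intro i
    have h1 := (my_condexp_clm hm (EuclideanSpace.proj (𝕜 := ℝ) i) hgi).symm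
    have h2 : (fun ω => (EuclideanSpace.proj (𝕜 := ℝ) i) ((μ[g|m]) ω)) =ᵐ[μ]
        fun ω => h ω i := by
      filter_upwards [hgh] with ω hω
      simp [hω]
    calc μ[(fun ω => g ω i)|m]
        =ᵐ[μ] μ[fun ω => (EuclideanSpace.proj (𝕜 := ℝ) i) (g ω)|m] := by
          apply condExp_congr_ae; filter_upwards with ω; simp
      _ =ᵐ[μ] (fun ω => (EuclideanSpace.proj (𝕜 := ℝ) i) ((μ[g|m]) ω)) := h1
      _ =ᵐ[μ] fun ω => h ω i := h2
  -- per-coordinate integral identity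
  have hterm : ∀ i, ∫ ω, f ω i * g ω i ∂μ = ∫ ω, f ω i * h ω i ∂μ := by
    intro i
    have hgii : Integrable (fun ω => g ω i) μ :=
      ((EuclideanSpace.proj (𝕜 := ℝ) i).comp_memLp' hg).integrable one_le_two
    have hpull := condExp_mul_of_stronglyMeasurable_left (hfim i)
      (by simpa [Pi.mul_def] using hmul f g hf hg i) hgii
    calc ∫ ω, f ω i * g ω i ∂μ
        = ∫ ω, (μ[(fun ω => f ω i) * (fun ω => g ω i)|m]) ω ∂μ :=
          (integral_condExp hm).symm
      _ = ∫ ω, f ω i * h ω i ∂μ := by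
          refine integral_congr_ae ?_
          filter_upwards [hpull, hcoord i] with ω h1 h2
          simp only [Pi.mul_apply] at h1 ⊢
          rw [h1, h2]
  calc ∫ ω, ⟪f ω, g ω⟫ ∂μ = ∫ ω, ∑ i, f ω i * g ω i ∂μ := by
        refine integral_congr_ae ?_
        filter_upwards with ω
        simp [PiLp.inner_apply, RCLike.inner_apply, mul_comm]
    _ = ∑ i, ∫ ω, f ω i * g ω i ∂μ :=
        integral_finset_sum _ (fun i _ => hmul f g hf hg i)
    _ = ∑ i, ∫ ω, f ω i * h ω i ∂μ := by
        exact Finset.sum_congr rfl fun i _ => hterm i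
    _ = ∫ ω, ∑ i, f ω i * h ω i ∂μ :=
        (integral_finset_sum _ (fun i _ => hmul f h hf hh i)).symm
    _ = ∫ ω, ⟪f ω, h ω⟫ ∂μ := by
        refine integral_congr_ae ?_
        filter_upwards with ω
        simp [PiLp.inner_apply, RCLike.inner_apply, mul_comm]

end Aux2

/-- Static-target core of Theorem 1: the online SGD iteration
`Z_{t+1} = Z_t − η g_t` with conditionally unbiased stochastic gradients
(`E[g_t | 𝒢_t] = G Z_t − b` a.e.) of second moment at most `σ²`, for a symmetric
matrix `G` with `x ⬝ (G x) ≥ τ ‖x‖²` (`τ > 0`), `G z⋆ = b`, and stepsize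
`0 < η ≤ 1/(2τ)`, satisfies for every `t`
`E‖Z_t − z⋆‖² ≤ (1 − 2ητ)^t E‖Z_0 − z⋆‖² + (1 − (1 − 2ητ)^t) ησ²/(2τ)`. -/
theorem sgd_geometric_convergence {Ω : Type*} {mΩ : MeasurableSpace Ω}
    (μ : Measure Ω) [IsProbabilityMeasure μ]
    (𝒢 : Filtration ℕ mΩ) {n : ℕ}
    (G : Matrix (Fin n) (Fin n) ℝ) (hGsymm : G.IsSymm) (τ : ℝ) (hτ : 0 < τ)
    (hlb : ∀ x : EuclideanSpace ℝ (Fin n),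
      τ * ‖x‖ ^ 2 ≤ ⟪x, Matrix.toEuclideanLin G x⟫)
    (b zstar : EuclideanSpace ℝ (Fin n))
    (hzstar : Matrix.toEuclideanLin G zstar = b)
    (σ : ℝ) (hσ : 0 ≤ σ) (η : ℝ) (hη : 0 < η) (hη' : η ≤ 1 / (2 * τ))
    (Z g : ℕ → Ω → EuclideanSpace ℝ (Fin n))
    (hZmeas : ∀ t, StronglyMeasurable[𝒢 t] (Z t))
    (hZ : ∀ t, MemLp (Z t) 2 μ)
    (hg : ∀ t, MemLp (g t) 2 μ)
    (hgmoment : ∀ t, ∫ ω, ‖g t ω‖ ^ 2 ∂μ ≤ σ ^ 2)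
    (hunbiased : ∀ t, μ[g t|𝒢 t] =ᵐ[μ] fun ω => Matrix.toEuclideanLin G (Z t ω) - b)
    (hiter : ∀ t ω, Z (t + 1) ω = Z t ω - η • g t ω) :
    ∀ t, ∫ ω, ‖Z t ω - zstar‖ ^ 2 ∂μ ≤
      (1 - 2 * η * τ) ^ t * ∫ ω, ‖Z 0 ω - zstar‖ ^ 2 ∂μ +
        (1 - (1 - 2 * η * τ) ^ t) * (η * σ ^ 2) / (2 * τ) := by
  -- one-step bound
  have key : ∀ t, ∫ ω, ‖Z (t + 1) ω - zstar‖ ^ 2 ∂μ ≤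
      (1 - 2 * η * τ) * ∫ ω, ‖Z t ω - zstar‖ ^ 2 ∂μ + η ^ 2 * σ ^ 2 := by
    intro t
    haveI : SigmaFinite (μ.trim (𝒢.le t)) := by
      have : IsFiniteMeasure (μ.trim (𝒢.le t)) := isFiniteMeasure_trim _
      infer_instance
    set e : Ω → EuclideanSpace ℝ (Fin n) := fun ω => Z t ω - zstar with he_def
    have he2 : MemLp e 2 μ := (hZ t).sub (memLp_const zstar)
    have hem : StronglyMeasurable[𝒢 t] e := (hZmeas t).sub stronglyMeasurable_const
    have hGe2 : MemLp (fun ω => Matrix.toEuclideanLin G (e ω)) 2 μ := by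
      exact
        (LinearMap.toContinuousLinearMap (Matrix.toEuclideanLin G)).comp_memLp' he2
    have hInt_e : Integrable (fun ω => ‖e ω‖ ^ 2) μ :=
      (memLp_two_iff_integrable_sq_norm he2.1).mp he2
    have hInt_g : Integrable (fun ω => ‖g t ω‖ ^ 2) μ :=
      (memLp_two_iff_integrable_sq_norm (hg t).1).mp (hg t)
    have hInt_inner : Integrable (fun ω => ⟪e ω, g t ω⟫) μ :=
      my_integrable_inner he2 (hg t)
    have hInt_innerGe : Integrable (fun ω => ⟪e ω, Matrix.toEuclideanLin G (e ω)⟫) μ :=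
      my_integrable_inner he2 hGe2
    -- pointwise expansion
    have hexp : ∀ ω, ‖Z (t + 1) ω - zstar‖ ^ 2 =
        ‖e ω‖ ^ 2 - 2 * η * ⟪e ω, g t ω⟫ + η ^ 2 * ‖g t ω‖ ^ 2 := by
      intro ω
      rw [hiter t ω]
      have h1 : Z t ω - η • g t ω - zstar = e ω - η • g t ω := by
        simp [he_def]; abel
      rw [h1, norm_sub_sq_real, real_inner_smul_right, norm_smul]
      simp [abs_of_pos hη]
      ring
    -- conditional expectation step
    have hGe_eq : (fun ω => Matrix.toEuclideanLin G (Z t ω) - b) =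
        fun ω => Matrix.toEuclideanLin G (e ω) := by
      funext ω; simp [he_def, map_sub, hzstar]
    have hinner_eq : ∫ ω, ⟪e ω, g t ω⟫ ∂μ =
        ∫ ω, ⟪e ω, Matrix.toEuclideanLin G (e ω)⟫ ∂μ := by
      refine my_integral_inner_condexp (𝒢.le t) hem he2 (hg t) hGe2 ?_
      refine (hunbiased t).trans ?_
      rw [hGe_eq]
    have hinner_ge : τ * ∫ ω, ‖e ω‖ ^ 2 ∂μ ≤ ∫ ω, ⟪e ω, g t ω⟫ ∂μ := by
      rw [hinner_eq, ← integral_const_mul]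
      exact integral_mono (hInt_e.const_mul τ) hInt_innerGe fun ω => hlb (e ω)
    -- integrate the expansion
    have hsplit : ∫ ω, ‖Z (t + 1) ω - zstar‖ ^ 2 ∂μ =
        ∫ ω, ‖e ω‖ ^ 2 ∂μ - 2 * η * ∫ ω, ⟪e ω, g t ω⟫ ∂μ
          + η ^ 2 * ∫ ω, ‖g t ω‖ ^ 2 ∂μ := by
      simp_rw [hexp]
      have i1 : Integrable (fun ω => ‖e ω‖ ^ 2 - 2 * η * ⟪e ω, g t ω⟫) μ :=
        hInt_e.sub (hInt_inner.const_mul _)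
      have i2 : Integrable (fun ω => η ^ 2 * ‖g t ω‖ ^ 2) μ := hInt_g.const_mul _
      rw [integral_add i1 i2, integral_sub hInt_e (hInt_inner.const_mul _),
        integral_const_mul, integral_const_mul]
    rw [hsplit]
    have hη2 : 0 ≤ 2 * η := by linarith
    have hgm := hgmoment t
    nlinarith [mul_le_mul_of_nonneg_left hinner_ge hη2, sq_nonneg η]
  -- induction
  have ha0 : 0 ≤ 1 - 2 * η * τ := by
    have h2τ : 0 < 2 * τ := by linarith
    have := (le_div_iff₀ h2τ).mp hη'
    linarith
  have hc : η ^ 2 * σ ^ 2 = (2 * η * τ) * ((η * σ ^ 2) / (2 * τ)) := by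
    field_simp
  intro t
  induction t with
  | zero => simp
  | succ t ih =>
      have hstep := key t
      have hmul := mul_le_mul_of_nonneg_left ih ha0
      calc ∫ ω, ‖Z (t + 1) ω - zstar‖ ^ 2 ∂μ
          ≤ (1 - 2 * η * τ) * ∫ ω, ‖Z t ω - zstar‖ ^ 2 ∂μ + η ^ 2 * σ ^ 2 := hstep
        _ ≤ (1 - 2 * η * τ) * ((1 - 2 * η * τ) ^ t * ∫ ω, ‖Z 0 ω - zstar‖ ^ 2 ∂μ +
              (1 - (1 - 2 * η * τ) ^ t) * (η * σ ^ 2) / (2 * τ)) + η ^ 2 * σ ^ 2 := by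
            linarith
        _ = (1 - 2 * η * τ) ^ (t + 1) * ∫ ω, ‖Z 0 ω - zstar‖ ^ 2 ∂μ +
              (1 - (1 - 2 * η * τ) ^ (t + 1)) * (η * σ ^ 2) / (2 * τ) := by
            rw [hc]
            have hτ' : (2 * τ) ≠ 0 := by positivity
            field_simp
            ring
end
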